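/- The number of n-permutations avoiding the POP P_4 (poset on {1,2,3,4} with 1 > 3) equals n·F(n). Moreover, for n ≥ 4, Av_n(P_4) is the disjoint union of: {1 ⊕ σ : σ ∈ Av_{n-1}(P_4)}, {21 ⊕ σ : σ ∈ Av_{n-2}(P_4)}, {σ ⊖ 1 : σ ∈ Av_{n-1}(P_3)}, and {3142[1,1,σ,1] : σ ∈ Av_{n-3}(P_3)}. -/

import Mathlib

/-- `π` avoids the POP `P_3` (poset on `{1,2,3}` with `1 > 3`). -/
def AvoidsP3 {n : ℕ} (π : Equiv.Perm (Fin n)) : Prop :=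
  ¬ ∃ i j k : Fin n, i < j ∧ j < k ∧ π k < π i

/-- `π` avoids the POP `P_4` (poset on `{1,2,3,4}` with `1 > 3`): there are no
positions `i < j < k < l` with `π i > π k`. -/
def AvoidsP4 {n : ℕ} (π : Equiv.Perm (Fin n)) : Prop :=
  ¬ ∃ i j k l : Fin n, i < j ∧ j < k ∧ k < l ∧ π k < π i

/-- `π = 1 ⊕ σ` for some `σ ∈ Av_{n-1}(P_4)`. -/
def InA (n : ℕ) (π : Equiv.Perm (Fin n)) : Prop :=
  ∃ σ : Equiv.Perm (Fin (n - 1)), AvoidsP4 σ ∧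
    (∀ h : 0 < n, (π ⟨0, h⟩ : ℕ) = 0) ∧
    ∀ (i : Fin (n - 1)) (h : (i : ℕ) + 1 < n), (π ⟨(i : ℕ) + 1, h⟩ : ℕ) = (σ i : ℕ) + 1

/-- `π = 21 ⊕ σ` for some `σ ∈ Av_{n-2}(P_4)`. -/
def InB (n : ℕ) (π : Equiv.Perm (Fin n)) : Prop :=
  ∃ σ : Equiv.Perm (Fin (n - 2)), AvoidsP4 σ ∧
    (∀ h : 0 < n, (π ⟨0, h⟩ : ℕ) = 1) ∧ (∀ h : 1 < n, (π ⟨1, h⟩ : ℕ) = 0) ∧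
    ∀ (i : Fin (n - 2)) (h : (i : ℕ) + 2 < n), (π ⟨(i : ℕ) + 2, h⟩ : ℕ) = (σ i : ℕ) + 2

/-- `π = σ ⊖ 1` for some `σ ∈ Av_{n-1}(P_3)`. -/
def InC (n : ℕ) (π : Equiv.Perm (Fin n)) : Prop :=
  ∃ σ : Equiv.Perm (Fin (n - 1)), AvoidsP3 σ ∧
    (∀ h : n - 1 < n, (π ⟨n - 1, h⟩ : ℕ) = 0) ∧
    ∀ (i : Fin (n - 1)) (h : (i : ℕ) < n), (π ⟨(i : ℕ), h⟩ : ℕ) = (σ i : ℕ) + 1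

/-- `π = 3142[1, 1, σ, 1]` for some `σ ∈ Av_{n-3}(P_3)`. -/
def InD (n : ℕ) (π : Equiv.Perm (Fin n)) : Prop :=
  ∃ σ : Equiv.Perm (Fin (n - 3)), AvoidsP3 σ ∧
    (∀ h : 0 < n, (π ⟨0, h⟩ : ℕ) = 2) ∧ (∀ h : 1 < n, (π ⟨1, h⟩ : ℕ) = 0) ∧
    (∀ h : n - 1 < n, (π ⟨n - 1, h⟩ : ℕ) = 1) ∧
    ∀ (i : Fin (n - 3)) (h : (i : ℕ) + 2 < n), (π ⟨(i : ℕ) + 2, h⟩ : ℕ) = (σ i : ℕ) + 3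


open Equiv

lemma char3 {n : ℕ} (π : Perm (Fin n)) :
    AvoidsP3 π ↔ ∀ i k : Fin n, (i : ℕ) + 2 ≤ (k : ℕ) → π i < π k := by
  constructor
  · intro h i k hik
    rcases lt_trichotomy (π i) (π k) with hl | he | hg
    · exact hl
    · exact absurd (π.injective he) (by intro hik'; subst hik'; omega)
    · exact absurd ⟨i, ⟨(i : ℕ) + 1, by omega⟩, k, by simp [Fin.lt_def], by simp [Fin.lt_def]; omega, hg⟩ h
  · rintro h ⟨i, j, k, hij, hjk, hlt⟩
    have := h i k (by rw [Fin.lt_def] at hij hjk; omega)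
    exact absurd this (not_lt.2 hlt.le)

lemma char4 {n : ℕ} (π : Perm (Fin n)) :
    AvoidsP4 π ↔ ∀ i k : Fin n, (i : ℕ) + 2 ≤ (k : ℕ) → (k : ℕ) + 1 < n → π i < π k := by
  constructor
  · intro h i k hik hkn
    rcases lt_trichotomy (π i) (π k) with hl | he | hg
    · exact hl
    · exact absurd (π.injective he) (by intro hik'; subst hik'; omega)
    · exact absurd ⟨i, ⟨(i : ℕ) + 1, by omega⟩, k, ⟨(k : ℕ) + 1, hkn⟩,
        by simp [Fin.lt_def], by simp [Fin.lt_def]; omega, by simp [Fin.lt_def], hg⟩ h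
  · rintro h ⟨i, j, k, l, hij, hjk, hkl, hlt⟩
    have := h i k (by rw [Fin.lt_def] at hij hjk; omega)
      (by rw [Fin.lt_def] at hkl; have := l.isLt; omega)
    exact absurd this (not_lt.2 hlt.le)

-- generic: build a perm of Fin m from an injective val description
noncomputable def mkPerm {m : ℕ} (g : Fin m → ℕ) (hb : ∀ i, g i < m)
    (hinj : ∀ a b, g a = g b → a = b) : Perm (Fin m) :=
  Equiv.ofBijective (fun i => ⟨g i, hb i⟩)
    (Finite.injective_iff_bijective.mp (fun a b h => hinj a b (by
      simpa [Fin.ext_iff] using h)))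

lemma mkPerm_val {m : ℕ} (g : Fin m → ℕ) (hb : ∀ i, g i < m)
    (hinj : ∀ a b, g a = g b → a = b) (i : Fin m) :
    (mkPerm g hb hinj i : ℕ) = g i := rfl

noncomputable def shrink (c r : ℕ) {n m : ℕ} (π : Perm (Fin n))
    (hb : ∀ i : Fin m, (i : ℕ) + c < n)
    (hv : ∀ i : Fin m, r ≤ (π ⟨(i : ℕ) + c, hb i⟩ : ℕ) ∧
      (π ⟨(i : ℕ) + c, hb i⟩ : ℕ) - r < m) : Perm (Fin m) :=
  mkPerm (fun i => (π ⟨(i : ℕ) + c, hb i⟩ : ℕ) - r) (fun i => (hv i).2)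
    (fun a b hab => by
      have ha := (hv a).1
      have hbv := (hv b).1
      have : π ⟨(a : ℕ) + c, hb a⟩ = π ⟨(b : ℕ) + c, hb b⟩ := Fin.ext (by omega)
      have := π.injective this
      simp only [Fin.mk.injEq] at this
      exact Fin.ext (by omega))

lemma shrink_val (c r : ℕ) {n m : ℕ} (π : Perm (Fin n))
    (hb : ∀ i : Fin m, (i : ℕ) + c < n)
    (hv : ∀ i : Fin m, r ≤ (π ⟨(i : ℕ) + c, hb i⟩ : ℕ) ∧
      (π ⟨(i : ℕ) + c, hb i⟩ : ℕ) - r < m) (i : Fin m) :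
    (shrink c r π hb hv i : ℕ) = (π ⟨(i : ℕ) + c, hb i⟩ : ℕ) - r := rfl


lemma shrink_val' (c r : ℕ) {n m : ℕ} (π : Perm (Fin n))
    (hb : ∀ i : Fin m, (i : ℕ) + c < n)
    (hv : ∀ i : Fin m, r ≤ (π ⟨(i : ℕ) + c, hb i⟩ : ℕ) ∧
      (π ⟨(i : ℕ) + c, hb i⟩ : ℕ) - r < m) (i : Fin m) (a : Fin n)
    (ha : (a : ℕ) = (i : ℕ) + c) :
    (shrink c r π hb hv i : ℕ) = (π a : ℕ) - r := by
  have h2 : (⟨(i : ℕ) + c, hb i⟩ : Fin n) = a := Fin.ext (by simp [ha])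
  rw [shrink_val, h2]

section
variable {m : ℕ}

noncomputable def permA (σ : Perm (Fin m)) : Perm (Fin (m + 1)) :=
  Equiv.ofBijective (Fin.cons 0 fun i => (σ i).succ)
    (Finite.injective_iff_bijective.mp (by
      intro a b h
      induction a using Fin.cases <;> induction b using Fin.cases <;>
        simp_all [Fin.ext_iff, Fin.val_succ]
      exact congrArg _ (σ.injective (Fin.ext h))))

lemma permA_zero (σ : Perm (Fin m)) (h : 0 < m + 1) : (permA σ ⟨0, h⟩ : ℕ) = 0 := by
  have : (⟨0, h⟩ : Fin (m+1)) = 0 := rfl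
  rw [this]
  simp [permA, Equiv.ofBijective]

lemma permA_succ (σ : Perm (Fin m)) (i : Fin m) (h : (i : ℕ) + 1 < m + 1) :
    (permA σ ⟨(i : ℕ) + 1, h⟩ : ℕ) = (σ i : ℕ) + 1 := by
  have : (⟨(i : ℕ) + 1, h⟩ : Fin (m+1)) = Fin.succ i := rfl
  rw [this]
  simp [permA, Equiv.ofBijective]

end

section
variable {m : ℕ}

noncomputable def permB (σ : Perm (Fin m)) : Perm (Fin (m + 2)) :=
  Equiv.ofBijective (Fin.cons 1 (Fin.cons 0 fun i => (σ i).succ.succ))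
    (Finite.injective_iff_bijective.mp (by
      intro a b h
      induction a using Fin.cases with
      | zero => induction b using Fin.cases with
        | zero => rfl
        | succ b => induction b using Fin.cases <;> simp_all [Fin.ext_iff, Fin.val_succ]
      | succ a =>
        induction a using Fin.cases with
        | zero => induction b using Fin.cases with
          | zero => simp_all [Fin.ext_iff, Fin.val_succ]
          | succ b => induction b using Fin.cases <;> simp_all [Fin.ext_iff, Fin.val_succ]
        | succ a => induction b using Fin.cases with
          | zero => simp_all [Fin.ext_iff, Fin.val_succ]
          | succ b =>
            induction b using Fin.cases <;> simp_all [Fin.ext_iff, Fin.val_succ]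
            exact congrArg _ (σ.injective (Fin.ext h))))

lemma permB_zero (σ : Perm (Fin m)) (h : 0 < m + 2) : (permB σ ⟨0, h⟩ : ℕ) = 1 := by
  have : (⟨0, h⟩ : Fin (m+2)) = 0 := rfl
  rw [this]; simp [permB, Equiv.ofBijective]

lemma permB_one (σ : Perm (Fin m)) (h : 1 < m + 2) : (permB σ ⟨1, h⟩ : ℕ) = 0 := by
  have : (⟨1, h⟩ : Fin (m+2)) = Fin.succ 0 := rfl
  rw [this]; simp [permB, Equiv.ofBijective]

lemma permB_two (σ : Perm (Fin m)) (i : Fin m) (h : (i : ℕ) + 2 < m + 2) :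
    (permB σ ⟨(i : ℕ) + 2, h⟩ : ℕ) = (σ i : ℕ) + 2 := by
  have : (⟨(i : ℕ) + 2, h⟩ : Fin (m+2)) = Fin.succ (Fin.succ i) := rfl
  rw [this]; simp [permB, Equiv.ofBijective]

end

section
variable {m : ℕ}

noncomputable def permC (σ : Perm (Fin m)) : Perm (Fin (m + 1)) :=
  Equiv.ofBijective (Fin.lastCases 0 fun i => (σ i).succ)
    (Finite.injective_iff_bijective.mp (by
      intro a b h
      induction a using Fin.lastCases <;> induction b using Fin.lastCases <;>
        simp_all [Fin.ext_iff, Fin.val_succ]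
      exact congrArg _ (σ.injective (Fin.ext h))))

lemma permC_last (σ : Perm (Fin m)) (h : m < m + 1) : (permC σ ⟨m, h⟩ : ℕ) = 0 := by
  have : (⟨m, h⟩ : Fin (m+1)) = Fin.last m := rfl
  rw [this]; simp [permC, Equiv.ofBijective]

lemma permC_mid (σ : Perm (Fin m)) (i : Fin m) (h : (i : ℕ) < m + 1) :
    (permC σ ⟨(i : ℕ), h⟩ : ℕ) = (σ i : ℕ) + 1 := by
  have : (⟨(i : ℕ), h⟩ : Fin (m+1)) = Fin.castSucc i := rfl
  rw [this]; simp [permC, Equiv.ofBijective]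

noncomputable def permD (σ : Perm (Fin m)) : Perm (Fin (m + 3)) :=
  (permB (permC σ)).trans (Equiv.swap ⟨1, by omega⟩ ⟨2, by omega⟩)

lemma permD_apply (σ : Perm (Fin m)) (j : Fin (m + 3)) :
    permD σ j = Equiv.swap ⟨1, by omega⟩ ⟨2, by omega⟩ (permB (permC σ) j) := rfl

lemma permD_zero (σ : Perm (Fin m)) (h : 0 < m + 3) : (permD σ ⟨0, h⟩ : ℕ) = 2 := by
  rw [permD_apply]
  have h1 : permB (permC σ) ⟨0, h⟩ = (⟨1, by omega⟩ : Fin (m + 3)) :=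
    Fin.ext (permB_zero _ h)
  rw [h1, Equiv.swap_apply_left]

lemma permD_one (σ : Perm (Fin m)) (h : 1 < m + 3) : (permD σ ⟨1, h⟩ : ℕ) = 0 := by
  rw [permD_apply]
  have h1 : permB (permC σ) ⟨1, h⟩ = (⟨0, by omega⟩ : Fin (m + 3)) :=
    Fin.ext (permB_one _ h)
  rw [h1, Equiv.swap_apply_of_ne_of_ne (by simp [Fin.ext_iff]) (by simp [Fin.ext_iff])]

lemma permD_last (σ : Perm (Fin m)) (h : m + 2 < m + 3) : (permD σ ⟨m + 2, h⟩ : ℕ) = 1 := by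
  rw [permD_apply]
  have h0 : (⟨m + 2, h⟩ : Fin (m + 3)) = ⟨((Fin.last m : Fin (m+1)) : ℕ) + 2, by simp⟩ := by
    simp [Fin.ext_iff]
  have h1 : permB (permC σ) ⟨m + 2, h⟩ = (⟨2, by omega⟩ : Fin (m + 3)) := by
    apply Fin.ext
    rw [h0, permB_two]
    have : ((permC σ (Fin.last m) : ℕ)) = 0 := by
      have : (Fin.last m) = (⟨m, by omega⟩ : Fin (m+1)) := rfl
      rw [this, permC_last]
    simp [this]
  rw [h1, Equiv.swap_apply_right]

lemma permD_mid (σ : Perm (Fin m)) (i : Fin m) (h : (i : ℕ) + 2 < m + 3) :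
    (permD σ ⟨(i : ℕ) + 2, h⟩ : ℕ) = (σ i : ℕ) + 3 := by
  rw [permD_apply]
  have h0 : (⟨(i : ℕ) + 2, h⟩ : Fin (m + 3)) = ⟨((i.castSucc : Fin (m+1)) : ℕ) + 2, by simp⟩ := by
    simp [Fin.ext_iff]
  have hc : ((permC σ i.castSucc : ℕ)) = (σ i : ℕ) + 1 := by
    have : (i.castSucc : Fin (m+1)) = (⟨(i : ℕ), by omega⟩ : Fin (m+1)) := rfl
    rw [this, permC_mid]
  have h1 : permB (permC σ) ⟨(i : ℕ) + 2, h⟩ = (⟨(σ i : ℕ) + 3, by omega⟩ : Fin (m + 3)) := by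
    apply Fin.ext
    rw [h0, permB_two]
    simp [hc]
  rw [h1, Equiv.swap_apply_of_ne_of_ne (by simp [Fin.ext_iff]) (by simp [Fin.ext_iff])]

end

section
variable {m : ℕ}
lemma permA_val_zero' (σ : Perm (Fin m)) {j : Fin (m+1)} (hj : (j : ℕ) = 0) :
    (permA σ j : ℕ) = 0 := by
  have : j = ⟨0, by omega⟩ := Fin.ext hj
  rw [this, permA_zero]

lemma permA_val_succ' (σ : Perm (Fin m)) {j : Fin (m+1)} (hj : 1 ≤ (j : ℕ)) :
    (permA σ j : ℕ) = (σ ⟨(j : ℕ) - 1, by have := j.isLt; omega⟩ : ℕ) + 1 := by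
  have h2 : j = ⟨((⟨(j : ℕ) - 1, by have := j.isLt; omega⟩ : Fin m) : ℕ) + 1, by
      have := j.isLt; simp; omega⟩ := Fin.ext (by simp; omega)
  conv_lhs => rw [h2]
  rw [permA_succ]

lemma permA_avoids3 {σ : Perm (Fin m)} (h : AvoidsP3 σ) : AvoidsP3 (permA σ) := by
  rw [char3] at h ⊢
  intro i k hik
  rw [Fin.lt_def]
  have hk := permA_val_succ' σ (j := k) (by omega)
  rcases Nat.eq_zero_or_pos (i : ℕ) with h0 | h0
  · rw [permA_val_zero' σ h0, hk]; omega
  · rw [permA_val_succ' σ h0, hk]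
    have := h ⟨(i : ℕ) - 1, by have := i.isLt; omega⟩ ⟨(k : ℕ) - 1, by have := k.isLt; omega⟩
      (by simp; omega)
    rw [Fin.lt_def] at this
    omega

lemma permA_avoids4 {σ : Perm (Fin m)} (h : AvoidsP4 σ) : AvoidsP4 (permA σ) := by
  rw [char4] at h ⊢
  intro i k hik hkn
  rw [Fin.lt_def]
  have hk := permA_val_succ' σ (j := k) (by omega)
  rcases Nat.eq_zero_or_pos (i : ℕ) with h0 | h0
  · rw [permA_val_zero' σ h0, hk]; omega
  · rw [permA_val_succ' σ h0, hk]
    have := h ⟨(i : ℕ) - 1, by have := i.isLt; omega⟩ ⟨(k : ℕ) - 1, by have := k.isLt; omega⟩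
      (by simp; omega) (by simp; omega)
    rw [Fin.lt_def] at this
    omega

lemma permA_inj : Function.Injective (permA (m := m)) := by
  intro σ σ' h
  apply Equiv.ext
  intro i
  apply Fin.ext
  have := congrArg (fun τ : Perm (Fin (m+1)) => (τ ⟨(i : ℕ) + 1, by have := i.isLt; omega⟩ : ℕ)) h
  simp only [permA_succ] at this
  omega

lemma permB_val_zero' (σ : Perm (Fin m)) {j : Fin (m+2)} (hj : (j : ℕ) = 0) :
    (permB σ j : ℕ) = 1 := by
  have : j = ⟨0, by omega⟩ := Fin.ext hj
  rw [this, permB_zero]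

lemma permB_val_one' (σ : Perm (Fin m)) {j : Fin (m+2)} (hj : (j : ℕ) = 1) :
    (permB σ j : ℕ) = 0 := by
  have : j = ⟨1, by omega⟩ := Fin.ext hj
  rw [this, permB_one]

lemma permB_val_two' (σ : Perm (Fin m)) {j : Fin (m+2)} (hj : 2 ≤ (j : ℕ)) :
    (permB σ j : ℕ) = (σ ⟨(j : ℕ) - 2, by have := j.isLt; omega⟩ : ℕ) + 2 := by
  have h2 : j = ⟨((⟨(j : ℕ) - 2, by have := j.isLt; omega⟩ : Fin m) : ℕ) + 2, by
      have := j.isLt; simp; omega⟩ := Fin.ext (by simp; omega)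
  conv_lhs => rw [h2]
  rw [permB_two]

lemma permB_avoids3 {σ : Perm (Fin m)} (h : AvoidsP3 σ) : AvoidsP3 (permB σ) := by
  rw [char3] at h ⊢
  intro i k hik
  rw [Fin.lt_def]
  have hk := permB_val_two' σ (j := k) (by omega)
  rcases Nat.lt_or_ge (i : ℕ) 2 with h0 | h0
  · rcases Nat.eq_zero_or_pos (i : ℕ) with h1 | h1
    · rw [permB_val_zero' σ h1, hk]; omega
    · rw [permB_val_one' σ (by omega), hk]; omega
  · rw [permB_val_two' σ h0, hk]
    have := h ⟨(i : ℕ) - 2, by have := i.isLt; omega⟩ ⟨(k : ℕ) - 2, by have := k.isLt; omega⟩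
      (by simp; omega)
    rw [Fin.lt_def] at this
    omega

lemma permB_avoids4 {σ : Perm (Fin m)} (h : AvoidsP4 σ) : AvoidsP4 (permB σ) := by
  rw [char4] at h ⊢
  intro i k hik hkn
  rw [Fin.lt_def]
  have hk := permB_val_two' σ (j := k) (by omega)
  rcases Nat.lt_or_ge (i : ℕ) 2 with h0 | h0
  · rcases Nat.eq_zero_or_pos (i : ℕ) with h1 | h1
    · rw [permB_val_zero' σ h1, hk]; omega
    · rw [permB_val_one' σ (by omega), hk]; omega
  · rw [permB_val_two' σ h0, hk]
    have := h ⟨(i : ℕ) - 2, by have := i.isLt; omega⟩ ⟨(k : ℕ) - 2, by have := k.isLt; omega⟩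
      (by simp; omega) (by simp; omega)
    rw [Fin.lt_def] at this
    omega

lemma permB_inj : Function.Injective (permB (m := m)) := by
  intro σ σ' h
  apply Equiv.ext
  intro i
  apply Fin.ext
  have := congrArg (fun τ : Perm (Fin (m+2)) => (τ ⟨(i : ℕ) + 2, by have := i.isLt; omega⟩ : ℕ)) h
  simp only [permB_two] at this
  omega

lemma permC_val_last' (σ : Perm (Fin m)) {j : Fin (m+1)} (hj : (j : ℕ) = m) :
    (permC σ j : ℕ) = 0 := by
  have : j = ⟨m, by omega⟩ := Fin.ext hj
  rw [this, permC_last]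

lemma permC_val_mid' (σ : Perm (Fin m)) {j : Fin (m+1)} (hj : (j : ℕ) < m) :
    (permC σ j : ℕ) = (σ ⟨(j : ℕ), hj⟩ : ℕ) + 1 := by
  have h2 : j = ⟨((⟨(j : ℕ), hj⟩ : Fin m) : ℕ), by have := j.isLt; simp; omega⟩ := Fin.ext (by simp)
  conv_lhs => rw [h2]
  rw [permC_mid]

lemma permC_avoids4 {σ : Perm (Fin m)} (h : AvoidsP3 σ) : AvoidsP4 (permC σ) := by
  rw [char3] at h
  rw [char4]
  intro i k hik hkn
  rw [Fin.lt_def]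
  rw [permC_val_mid' σ (j := i) (by omega), permC_val_mid' σ (j := k) (by omega)]
  have := h ⟨(i : ℕ), by omega⟩ ⟨(k : ℕ), by omega⟩ (by simp; omega)
  rw [Fin.lt_def] at this
  omega

lemma permC_inj : Function.Injective (permC (m := m)) := by
  intro σ σ' h
  apply Equiv.ext
  intro i
  apply Fin.ext
  have := congrArg (fun τ : Perm (Fin (m+1)) => (τ ⟨(i : ℕ), by have := i.isLt; omega⟩ : ℕ)) h
  simp only [permC_mid] at this
  omega

lemma permD_val_zero' (σ : Perm (Fin m)) {j : Fin (m+3)} (hj : (j : ℕ) = 0) :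
    (permD σ j : ℕ) = 2 := by
  have : j = ⟨0, by omega⟩ := Fin.ext hj
  rw [this, permD_zero]

lemma permD_val_one' (σ : Perm (Fin m)) {j : Fin (m+3)} (hj : (j : ℕ) = 1) :
    (permD σ j : ℕ) = 0 := by
  have : j = ⟨1, by omega⟩ := Fin.ext hj
  rw [this, permD_one]

lemma permD_val_last' (σ : Perm (Fin m)) {j : Fin (m+3)} (hj : (j : ℕ) = m + 2) :
    (permD σ j : ℕ) = 1 := by
  have : j = ⟨m + 2, by omega⟩ := Fin.ext hj
  rw [this, permD_last]

lemma permD_val_mid' (σ : Perm (Fin m)) {j : Fin (m+3)} (hj1 : 2 ≤ (j : ℕ))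
    (hj2 : (j : ℕ) < m + 2) :
    (permD σ j : ℕ) = (σ ⟨(j : ℕ) - 2, by omega⟩ : ℕ) + 3 := by
  have h2 : j = ⟨((⟨(j : ℕ) - 2, by omega⟩ : Fin m) : ℕ) + 2, by simp; omega⟩ :=
    Fin.ext (by simp; omega)
  conv_lhs => rw [h2]
  rw [permD_mid]

lemma permD_avoids4 {σ : Perm (Fin m)} (h : AvoidsP3 σ) : AvoidsP4 (permD σ) := by
  rw [char3] at h
  rw [char4]
  intro i k hik hkn
  rw [Fin.lt_def]
  have hk := permD_val_mid' σ (j := k) (by omega) (by omega)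
  rcases Nat.lt_or_ge (i : ℕ) 2 with h0 | h0
  · rcases Nat.eq_zero_or_pos (i : ℕ) with h1 | h1
    · rw [permD_val_zero' σ h1, hk]; omega
    · rw [permD_val_one' σ (by omega), hk]; omega
  · rw [permD_val_mid' σ h0 (by omega), hk]
    have := h ⟨(i : ℕ) - 2, by omega⟩ ⟨(k : ℕ) - 2, by omega⟩ (by simp; omega)
    rw [Fin.lt_def] at this
    omega

lemma permD_inj : Function.Injective (permD (m := m)) := by
  intro σ σ' h
  apply Equiv.ext
  intro i
  apply Fin.ext
  have := congrArg (fun τ : Perm (Fin (m+3)) => (τ ⟨(i : ℕ) + 2, by have := i.isLt; omega⟩ : ℕ)) h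
  simp only [permD_mid] at this
  omega

end


section
variable {m : ℕ}

lemma permA_val_succ'' (σ : Perm (Fin m)) {j : Fin (m+1)} (i : Fin m)
    (hij : (j : ℕ) = (i : ℕ) + 1) : (permA σ j : ℕ) = (σ i : ℕ) + 1 := by
  have : j = ⟨(i : ℕ) + 1, by have := i.isLt; omega⟩ := Fin.ext hij
  rw [this, permA_succ]

lemma permB_val_two'' (σ : Perm (Fin m)) {j : Fin (m+2)} (i : Fin m)
    (hij : (j : ℕ) = (i : ℕ) + 2) : (permB σ j : ℕ) = (σ i : ℕ) + 2 := by
  have : j = ⟨(i : ℕ) + 2, by have := i.isLt; omega⟩ := Fin.ext hij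
  rw [this, permB_two]

lemma permC_val_mid'' (σ : Perm (Fin m)) {j : Fin (m+1)} (i : Fin m)
    (hij : (j : ℕ) = (i : ℕ)) : (permC σ j : ℕ) = (σ i : ℕ) + 1 := by
  have : j = ⟨(i : ℕ), by have := i.isLt; omega⟩ := Fin.ext hij
  rw [this, permC_mid]

lemma permD_val_mid'' (σ : Perm (Fin m)) {j : Fin (m+3)} (i : Fin m)
    (hij : (j : ℕ) = (i : ℕ) + 2) : (permD σ j : ℕ) = (σ i : ℕ) + 3 := by
  have : j = ⟨(i : ℕ) + 2, by have := i.isLt; omega⟩ := Fin.ext hij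
  rw [this, permD_mid]

end

lemma val_ne {n : ℕ} (π : Perm (Fin n)) {x y : Fin n} (h : (x : ℕ) ≠ (y : ℕ)) :
    (π x : ℕ) ≠ (π y : ℕ) := fun hc => h (congrArg Fin.val (π.injective (Fin.ext hc)))

lemma card_class {α β : Type*} (A : α → Prop) (f : α → β) (hf : Function.Injective f) :
    Nat.card {π : β // ∃ σ, A σ ∧ π = f σ} = Nat.card {σ : α // A σ} :=
  (Nat.card_eq_of_bijective (fun (s : {σ : α // A σ}) =>
      (⟨f s.1, s.1, s.2, rfl⟩ : {π : β // ∃ σ, A σ ∧ π = f σ}))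
    ⟨fun a b h => Subtype.ext (hf (congrArg Subtype.val h)),
     fun p => by
      obtain ⟨σ, hA, hp⟩ := p.2
      exact ⟨⟨σ, hA⟩, Subtype.ext hp.symm⟩⟩).symm

lemma card_or {α : Type*} [Finite α] (p q : α → Prop) (h : ∀ x, ¬ (p x ∧ q x)) :
    Nat.card {x // p x ∨ q x} = Nat.card {x // p x} + Nat.card {x // q x} := by
  classical
  rw [Nat.card_congr (subtypeOrEquiv p q (by
    rw [Pi.disjoint_iff]
    intro x
    rw [Prop.disjoint_iff]
    tauto)), Nat.card_sum]

lemma card_iff {α : Type*} (p q : α → Prop) (h : ∀ x, p x ↔ q x) :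
    Nat.card {x // p x} = Nat.card {x // q x} :=
  Nat.card_congr (Equiv.subtypeEquivRight h)


lemma decomp3 {k : ℕ} (π : Perm (Fin (k + 2))) (h : AvoidsP3 π) :
    (∃ σ : Perm (Fin (k + 1)), AvoidsP3 σ ∧ π = permA σ) ∨
    (∃ σ : Perm (Fin k), AvoidsP3 σ ∧ π = permB σ) := by
  have hchar := (char3 π).mp h
  have hple : (((π.symm ⟨0, by omega⟩ : Fin (k+2))) : ℕ) < 2 := by
    by_contra hge
    push_neg at hge
    have h2 := hchar ⟨0, by omega⟩ (π.symm ⟨0, by omega⟩) (by simpa using hge)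
    rw [Fin.lt_def] at h2
    simp at h2
  have hpz : (π (π.symm ⟨0, by omega⟩) : ℕ) = 0 := by simp
  rcases Nat.eq_zero_or_pos ((π.symm ⟨0, by omega⟩ : Fin (k+2)) : ℕ) with hp0 | hp1
  · -- π 0 = 0 : case A
    left
    have h0 : (π ⟨0, by omega⟩ : ℕ) = 0 := by
      have : (π.symm ⟨0, by omega⟩ : Fin (k+2)) = ⟨0, by omega⟩ := Fin.ext hp0
      rw [← this]
      exact hpz
    have hposv : ∀ j : Fin (k+2), (j : ℕ) ≠ 0 → 1 ≤ (π j : ℕ) := fun j hj => by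
      have := val_ne π (x := j) (y := ⟨0, by omega⟩) (by simpa using hj)
      omega
    have hb : ∀ i : Fin (k+1), (i : ℕ) + 1 < k + 2 := fun i => by have := i.isLt; omega
    have hv : ∀ i : Fin (k+1), 1 ≤ (π ⟨(i : ℕ) + 1, hb i⟩ : ℕ) ∧
        (π ⟨(i : ℕ) + 1, hb i⟩ : ℕ) - 1 < k + 1 := fun i =>
      ⟨hposv _ (by simp), by have := (π ⟨(i : ℕ) + 1, hb i⟩).isLt; omega⟩
    refine ⟨shrink 1 1 π hb hv, ?_, ?_⟩
    · rw [char3]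
      intro i k' hik
      rw [Fin.lt_def, shrink_val, shrink_val]
      have h2 := hchar ⟨(i : ℕ) + 1, hb i⟩ ⟨(k' : ℕ) + 1, hb k'⟩ (by simp; omega)
      rw [Fin.lt_def] at h2
      have := (hv i).1
      have := (hv k').1
      omega
    · apply Equiv.ext
      intro j
      apply Fin.ext
      have hj2 := j.isLt
      rcases Nat.eq_zero_or_pos (j : ℕ) with hj | hj
      · have e1 : (permA (shrink 1 1 π hb hv) j : ℕ) = 0 := permA_val_zero' _ hj
        have e2 : π j = π ⟨0, by omega⟩ := by congr 1; exact Fin.ext (by simp only [Fin.val_mk]; omega)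
        rw [e2]
        omega
      · have e1 := permA_val_succ'' (shrink 1 1 π hb hv)
          (j := j) ⟨(j : ℕ) - 1, by omega⟩ (by simp; omega)
        have e2 := shrink_val' 1 1 π hb hv ⟨(j : ℕ) - 1, by omega⟩
          (⟨(j : ℕ) - 1 + 1, by omega⟩ : Fin (k+2)) (by simp)
        have e3 : π j = π ⟨(j : ℕ) - 1 + 1, by omega⟩ := by congr 1; exact Fin.ext (by simp; omega)
        have e4 := hposv j (by omega)
        rw [e3]
        omega
  · -- π 1 = 0
    have h1 : (π ⟨1, by omega⟩ : ℕ) = 0 := by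
      have : (π.symm ⟨0, by omega⟩ : Fin (k+2)) = ⟨1, by omega⟩ :=
        Fin.ext (show ((π.symm ⟨0, by omega⟩ : Fin (k+2)) : ℕ) = 1 by omega)
      rw [← this]
      exact hpz
    -- position of value 1 must be 0
    have hqz : (π (π.symm ⟨1, by omega⟩) : ℕ) = 1 := by simp
    have hq0 : ((π.symm ⟨1, by omega⟩ : Fin (k+2)) : ℕ) = 0 := by
      by_contra hq
      have hq1 : ((π.symm ⟨1, by omega⟩ : Fin (k+2)) : ℕ) ≠ 1 := by
        intro hc
        have : (π.symm ⟨1, by omega⟩ : Fin (k+2)) = ⟨1, by omega⟩ :=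
          Fin.ext (show ((π.symm ⟨1, by omega⟩ : Fin (k+2)) : ℕ) = 1 by omega)
        rw [this] at hqz
        omega
      have hge : 2 ≤ ((π.symm ⟨1, by omega⟩ : Fin (k+2)) : ℕ) := by omega
      have h2 := hchar ⟨0, by omega⟩ (π.symm ⟨1, by omega⟩) (by simpa using hge)
      rw [Fin.lt_def] at h2
      -- π 0 < 1 so π 0 = 0, contradicting π 1 = 0
      have := val_ne π (x := ⟨0, by omega⟩) (y := ⟨1, by omega⟩) (by simp)
      omega
    have h0 : (π ⟨0, by omega⟩ : ℕ) = 1 := by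
      have : (π.symm ⟨1, by omega⟩ : Fin (k+2)) = ⟨0, by omega⟩ := Fin.ext hq0
      rw [← this]
      exact hqz
    right
    have hposv : ∀ j : Fin (k+2), (j : ℕ) ≠ 0 → (j : ℕ) ≠ 1 → 2 ≤ (π j : ℕ) := fun j hj hj' => by
      have := val_ne π (x := j) (y := ⟨0, by omega⟩) (by simpa using hj)
      have := val_ne π (x := j) (y := ⟨1, by omega⟩) (by simpa using hj')
      omega
    have hb : ∀ i : Fin k, (i : ℕ) + 2 < k + 2 := fun i => by have := i.isLt; omega
    have hv : ∀ i : Fin k, 2 ≤ (π ⟨(i : ℕ) + 2, hb i⟩ : ℕ) ∧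
        (π ⟨(i : ℕ) + 2, hb i⟩ : ℕ) - 2 < k := fun i =>
      ⟨hposv _ (by simp) (by simp), by
        have := (π ⟨(i : ℕ) + 2, hb i⟩).isLt
        have := i.isLt
        omega⟩
    refine ⟨shrink 2 2 π hb hv, ?_, ?_⟩
    · rw [char3]
      intro i k' hik
      rw [Fin.lt_def, shrink_val, shrink_val]
      have h2 := hchar ⟨(i : ℕ) + 2, hb i⟩ ⟨(k' : ℕ) + 2, hb k'⟩ (by simp; omega)
      rw [Fin.lt_def] at h2
      have := (hv i).1
      have := (hv k').1
      omega
    · apply Equiv.ext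
      intro j
      apply Fin.ext
      have hj2 := j.isLt
      rcases Nat.lt_or_ge (j : ℕ) 2 with hj | hj
      · rcases Nat.eq_zero_or_pos (j : ℕ) with hj' | hj'
        · have e1 : (permB (shrink 2 2 π hb hv) j : ℕ) = 1 := permB_val_zero' _ hj'
          have e2 : π j = π ⟨0, by omega⟩ := by congr 1; exact Fin.ext (by simp only [Fin.val_mk]; omega)
          rw [e2]
          omega
        · have e1 : (permB (shrink 2 2 π hb hv) j : ℕ) = 0 := permB_val_one' _ (by omega)
          have e2 : π j = π ⟨1, by omega⟩ := by congr 1; exact Fin.ext (by simp; omega)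
          rw [e2]
          omega
      · have e1 := permB_val_two'' (shrink 2 2 π hb hv)
          (j := j) ⟨(j : ℕ) - 2, by omega⟩ (by simp; omega)
        have e2 := shrink_val' 2 2 π hb hv ⟨(j : ℕ) - 2, by omega⟩
          (⟨(j : ℕ) - 2 + 2, by omega⟩ : Fin (k+2)) (by simp)
        have e3 : π j = π ⟨(j : ℕ) - 2 + 2, by omega⟩ := by congr 1; exact Fin.ext (by simp; omega)
        have e4 := hposv j (by omega) (by omega)
        rw [e3]
        omega

lemma avoids3_small {n : ℕ} (hn : n ≤ 2) (π : Perm (Fin n)) : AvoidsP3 π := by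
  rintro ⟨i, j, k, hij, hjk, -⟩
  rw [Fin.lt_def] at hij hjk
  have := k.isLt
  omega

lemma avoids4_small {n : ℕ} (hn : n ≤ 3) (π : Perm (Fin n)) : AvoidsP4 π := by
  rintro ⟨i, j, k, l, hij, hjk, hkl, -⟩
  rw [Fin.lt_def] at hij hjk hkl
  have := l.isLt
  omega

lemma card_all {α : Type*} (p : α → Prop) (h : ∀ x, p x) :
    Nat.card {x // p x} = Nat.card α := Nat.card_congr (Equiv.subtypeUnivEquiv h)

lemma card_perm_fin (n : ℕ) : Nat.card (Perm (Fin n)) = n.factorial := by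
  rw [Nat.card_eq_fintype_card, Fintype.card_perm, Fintype.card_fin]

lemma countP3 (m : ℕ) : Nat.card {π : Perm (Fin m) // AvoidsP3 π} = Nat.fib (m + 1) := by
  induction m using Nat.strong_induction_on with
  | _ m ih =>
    match m with
    | 0 => rw [card_all _ (avoids3_small (by omega)), card_perm_fin]; rfl
    | 1 => rw [card_all _ (avoids3_small (by omega)), card_perm_fin]; rfl
    | (k+2) =>
      have hiff : ∀ π : Perm (Fin (k+2)), AvoidsP3 π ↔
          ((∃ σ : Perm (Fin (k+1)), AvoidsP3 σ ∧ π = permA σ) ∨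
           (∃ σ : Perm (Fin k), AvoidsP3 σ ∧ π = permB σ)) := by
        intro π
        constructor
        · exact decomp3 π
        · rintro (⟨σ, hσ, rfl⟩ | ⟨σ, hσ, rfl⟩)
          exacts [permA_avoids3 hσ, permB_avoids3 hσ]
      rw [card_iff _ _ hiff, card_or _ _ (by
          rintro π ⟨⟨σ, -, rfl⟩, ⟨σ', -, h'⟩⟩
          have h1 := permA_zero σ (by omega)
          have h2 := permB_zero σ' (by omega)
          rw [← h'] at h2
          omega),
        card_class _ _ permA_inj, card_class _ _ permB_inj,
        ih (k+1) (by omega), ih k (by omega)]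
      have h2 : k + 2 + 1 = k + 1 + 2 := rfl
      rw [h2]
      have h1 := Nat.fib_add_two (n := k + 1)
      omega
lemma inA_iff {k : ℕ} (π : Perm (Fin (k + 4))) :
    InA (k + 4) π ↔ ∃ σ : Perm (Fin (k + 3)), AvoidsP4 σ ∧ π = permA σ := by
  constructor
  · rintro ⟨σ, hσ, h0, hs⟩
    refine ⟨σ, hσ, ?_⟩
    apply Equiv.ext
    intro j
    apply Fin.ext
    have hj2 := j.isLt
    rcases Nat.eq_zero_or_pos (j : ℕ) with hj | hj
    · have e1 : (permA σ j : ℕ) = 0 := permA_val_zero' (m := k + 3) _ hj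
      have e2 : π j = π ⟨0, by omega⟩ := by congr 1 <;> exact Fin.ext (by simp only [Fin.val_mk]; omega)
      have e3 := h0 (by omega)
      rw [e2]
      omega
    · have e1 := permA_val_succ'' (m := k + 3) σ (j := j) ⟨(j : ℕ) - 1, by omega⟩ (by simp only [Fin.val_mk]; omega)
      have e2 := hs ⟨(j : ℕ) - 1, by omega⟩ (by simp only [Fin.val_mk]; omega)
      simp only [Fin.val_mk] at e2
      have e3 : π j = π ⟨(j : ℕ) - 1 + 1, by omega⟩ := by congr 1 <;> exact Fin.ext (by simp only [Fin.val_mk]; omega)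
      rw [e3]
      omega
  · rintro ⟨σ, hσ, rfl⟩
    exact ⟨σ, hσ, fun h => permA_zero σ h, fun i h => permA_succ σ i h⟩

lemma inB_iff {k : ℕ} (π : Perm (Fin (k + 4))) :
    InB (k + 4) π ↔ ∃ σ : Perm (Fin (k + 2)), AvoidsP4 σ ∧ π = permB σ := by
  constructor
  · rintro ⟨σ, hσ, h0, h1, hs⟩
    refine ⟨σ, hσ, ?_⟩
    apply Equiv.ext
    intro j
    apply Fin.ext
    have hj2 := j.isLt
    rcases Nat.lt_or_ge (j : ℕ) 2 with hj | hj
    · rcases Nat.eq_zero_or_pos (j : ℕ) with hj' | hj'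
      · have e1 : (permB σ j : ℕ) = 1 := permB_val_zero' (m := k + 2) _ hj'
        have e2 : π j = π ⟨0, by omega⟩ := by congr 1 <;> exact Fin.ext (by simp only [Fin.val_mk]; omega)
        have e3 := h0 (by omega)
        rw [e2]
        omega
      · have e1 : (permB σ j : ℕ) = 0 := permB_val_one' (m := k + 2) _ (by omega)
        have e2 : π j = π ⟨1, by omega⟩ := by congr 1 <;> exact Fin.ext (by simp only [Fin.val_mk]; omega)
        have e3 := h1 (by omega)
        rw [e2]
        omega
    · have e1 := permB_val_two'' (m := k + 2) σ (j := j) ⟨(j : ℕ) - 2, by omega⟩ (by simp only [Fin.val_mk]; omega)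
      have e2 := hs ⟨(j : ℕ) - 2, by omega⟩ (by simp only [Fin.val_mk]; omega)
      simp only [Fin.val_mk] at e2
      have e3 : π j = π ⟨(j : ℕ) - 2 + 2, by omega⟩ := by congr 1 <;> exact Fin.ext (by simp only [Fin.val_mk]; omega)
      rw [e3]
      omega
  · rintro ⟨σ, hσ, rfl⟩
    exact ⟨σ, hσ, fun h => permB_zero σ h, fun h => permB_one σ h, fun i h => permB_two σ i h⟩

lemma inC_iff {k : ℕ} (π : Perm (Fin (k + 4))) :
    InC (k + 4) π ↔ ∃ σ : Perm (Fin (k + 3)), AvoidsP3 σ ∧ π = permC σ := by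
  constructor
  · rintro ⟨σ, hσ, hl, hs⟩
    refine ⟨σ, hσ, ?_⟩
    apply Equiv.ext
    intro j
    apply Fin.ext
    have hj2 := j.isLt
    rcases Nat.lt_or_ge (j : ℕ) (k + 3) with hj | hj
    · have e1 := permC_val_mid'' (m := k + 3) σ (j := j) ⟨(j : ℕ), by omega⟩ (by simp only [Fin.val_mk])
      have e2 := hs ⟨(j : ℕ), by omega⟩ (by simp only [Fin.val_mk]; omega)
      simp only [Fin.val_mk] at e2
      have e3 : π j = π ⟨(j : ℕ), by omega⟩ := by congr 1 <;> exact Fin.ext (by simp only [Fin.val_mk]; omega)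
      rw [e3]
      omega
    · have e1 : (permC σ j : ℕ) = 0 := permC_val_last' (m := k + 3) _ (by omega)
      have e2 : π j = π ⟨k + 4 - 1, by omega⟩ := by congr 1 <;> exact Fin.ext (by simp only [Fin.val_mk]; omega)
      have e3 := hl (by omega)
      rw [e2]
      omega
  · rintro ⟨σ, hσ, rfl⟩
    exact ⟨σ, hσ, fun h => permC_last σ h, fun i h => permC_mid σ i h⟩

lemma inD_iff {k : ℕ} (π : Perm (Fin (k + 4))) :
    InD (k + 4) π ↔ ∃ σ : Perm (Fin (k + 1)), AvoidsP3 σ ∧ π = permD σ := by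
  constructor
  · rintro ⟨σ, hσ, h0, h1, hl, hs⟩
    refine ⟨σ, hσ, ?_⟩
    apply Equiv.ext
    intro j
    apply Fin.ext
    have hj2 := j.isLt
    rcases Nat.lt_or_ge (j : ℕ) 2 with hj | hj
    · rcases Nat.eq_zero_or_pos (j : ℕ) with hj' | hj'
      · have e1 : (permD σ j : ℕ) = 2 := permD_val_zero' (m := k + 1) _ hj'
        have e2 : π j = π ⟨0, by omega⟩ := by congr 1 <;> exact Fin.ext (by simp only [Fin.val_mk]; omega)
        have e3 := h0 (by omega)
        rw [e2]
        omega
      · have e1 : (permD σ j : ℕ) = 0 := permD_val_one' (m := k + 1) _ (by omega)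
        have e2 : π j = π ⟨1, by omega⟩ := by congr 1 <;> exact Fin.ext (by simp only [Fin.val_mk]; omega)
        have e3 := h1 (by omega)
        rw [e2]
        omega
    · rcases Nat.lt_or_ge (j : ℕ) (k + 3) with hj3 | hj3
      · have e1 := permD_val_mid'' (m := k + 1) σ (j := j) ⟨(j : ℕ) - 2, by omega⟩ (by simp only [Fin.val_mk]; omega)
        have e2 := hs ⟨(j : ℕ) - 2, by omega⟩ (by simp only [Fin.val_mk]; omega)
        simp only [Fin.val_mk] at e2
        have e3 : π j = π ⟨(j : ℕ) - 2 + 2, by omega⟩ := by congr 1 <;> exact Fin.ext (by simp only [Fin.val_mk]; omega)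
        rw [e3]
        omega
      · have e1 : (permD σ j : ℕ) = 1 := permD_val_last' (m := k + 1) _ (by omega)
        have e2 : π j = π ⟨k + 4 - 1, by omega⟩ := by congr 1 <;> exact Fin.ext (by simp only [Fin.val_mk]; omega)
        have e3 := hl (by omega)
        rw [e2]
        omega
  · rintro ⟨σ, hσ, rfl⟩
    exact ⟨σ, hσ, fun h => permD_zero σ h, fun h => permD_one σ h,
      fun h => permD_last σ h, fun i h => permD_mid σ i h⟩

lemma decomp4 {k : ℕ} (π : Perm (Fin (k + 4))) (h : AvoidsP4 π) :
    InA (k + 4) π ∨ InB (k + 4) π ∨ InC (k + 4) π ∨ InD (k + 4) π := by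
  have hchar := (char4 π).mp h
  have hpz : (π (π.symm ⟨0, by omega⟩) : ℕ) = 0 := by simp
  have hp : ((π.symm ⟨0, by omega⟩ : Fin (k+4)) : ℕ) = 0 ∨
      ((π.symm ⟨0, by omega⟩ : Fin (k+4)) : ℕ) = 1 ∨
      ((π.symm ⟨0, by omega⟩ : Fin (k+4)) : ℕ) = k + 3 := by
    by_contra hc
    push_neg at hc
    have hb := (π.symm ⟨0, by omega⟩ : Fin (k+4)).isLt
    have h2 := hchar ⟨0, by omega⟩ (π.symm ⟨0, by omega⟩)
      (by simp only [Fin.val_mk]; omega) (by omega)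
    rw [Fin.lt_def] at h2
    omega
  rcases hp with hp0 | hp1 | hpl
  · -- case A : π 0 = 0
    left
    have h0 : (π ⟨0, by omega⟩ : ℕ) = 0 := by
      have e : (π.symm ⟨0, by omega⟩ : Fin (k+4)) = ⟨0, by omega⟩ := Fin.ext (by simp only [Fin.val_mk]; omega)
      rw [← e]; exact hpz
    have hposv : ∀ j : Fin (k+4), (j : ℕ) ≠ 0 → 1 ≤ (π j : ℕ) := fun j hj => by
      have := val_ne π (x := j) (y := ⟨0, by omega⟩) (by simp only [Fin.val_mk]; omega)
      omega
    have hb : ∀ i : Fin (k+3), (i : ℕ) + 1 < k + 4 := fun i => by have := i.isLt; omega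
    have hv : ∀ i : Fin (k+3), 1 ≤ (π ⟨(i : ℕ) + 1, hb i⟩ : ℕ) ∧
        (π ⟨(i : ℕ) + 1, hb i⟩ : ℕ) - 1 < k + 3 := fun i =>
      ⟨hposv _ (by simp only [Fin.val_mk]; omega),
       by have := (π ⟨(i : ℕ) + 1, hb i⟩).isLt; omega⟩
    refine ⟨shrink 1 1 π hb hv, ?_, fun hh => h0, fun i hh => ?_⟩
    · rw [char4]
      intro i k' hik hk'
      rw [Fin.lt_def, shrink_val, shrink_val]
      have h2 := hchar ⟨(i : ℕ) + 1, hb i⟩ ⟨(k' : ℕ) + 1, hb k'⟩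
        (by simp only [Fin.val_mk]; omega) (by simp only [Fin.val_mk]; omega)
      rw [Fin.lt_def] at h2
      have := (hv i).1
      have := (hv k').1
      omega
    · have e2 := shrink_val 1 1 π hb hv i
      have := (hv i).1
      omega
  · -- π 1 = 0
    have h1 : (π ⟨1, by omega⟩ : ℕ) = 0 := by
      have e : (π.symm ⟨0, by omega⟩ : Fin (k+4)) = ⟨1, by omega⟩ := Fin.ext (by simp only [Fin.val_mk]; omega)
      rw [← e]; exact hpz
    have hqz : (π (π.symm ⟨1, by omega⟩) : ℕ) = 1 := by simp
    have hq : ((π.symm ⟨1, by omega⟩ : Fin (k+4)) : ℕ) = 0 ∨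
        ((π.symm ⟨1, by omega⟩ : Fin (k+4)) : ℕ) = k + 3 := by
      by_contra hc
      push_neg at hc
      have hbq := (π.symm ⟨1, by omega⟩ : Fin (k+4)).isLt
      have hq1 : ((π.symm ⟨1, by omega⟩ : Fin (k+4)) : ℕ) ≠ 1 := by
        intro hc'
        have e : (π.symm ⟨1, by omega⟩ : Fin (k+4)) = ⟨1, by omega⟩ := Fin.ext (by simp only [Fin.val_mk]; omega)
        rw [e] at hqz
        omega
      have h2 := hchar ⟨0, by omega⟩ (π.symm ⟨1, by omega⟩)
        (by simp only [Fin.val_mk]; omega) (by omega)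
      rw [Fin.lt_def] at h2
      have := val_ne π (x := ⟨0, by omega⟩) (y := ⟨1, by omega⟩) (by simp)
      omega
    rcases hq with hq0 | hql
    · -- case B : π 0 = 1, π 1 = 0
      right; left
      have h0 : (π ⟨0, by omega⟩ : ℕ) = 1 := by
        have e : (π.symm ⟨1, by omega⟩ : Fin (k+4)) = ⟨0, by omega⟩ := Fin.ext (by simp only [Fin.val_mk]; omega)
        rw [← e]; exact hqz
      have hposv : ∀ j : Fin (k+4), (j : ℕ) ≠ 0 → (j : ℕ) ≠ 1 → 2 ≤ (π j : ℕ) :=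
        fun j hj hj' => by
          have := val_ne π (x := j) (y := ⟨0, by omega⟩) (by simp only [Fin.val_mk]; omega)
          have := val_ne π (x := j) (y := ⟨1, by omega⟩) (by simp only [Fin.val_mk]; omega)
          omega
      have hb : ∀ i : Fin (k+2), (i : ℕ) + 2 < k + 4 := fun i => by have := i.isLt; omega
      have hv : ∀ i : Fin (k+2), 2 ≤ (π ⟨(i : ℕ) + 2, hb i⟩ : ℕ) ∧
          (π ⟨(i : ℕ) + 2, hb i⟩ : ℕ) - 2 < k + 2 := fun i =>
        ⟨hposv _ (by simp only [Fin.val_mk]; omega) (by simp only [Fin.val_mk]; omega),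
         by have := (π ⟨(i : ℕ) + 2, hb i⟩).isLt; omega⟩
      refine ⟨shrink 2 2 π hb hv, ?_, fun hh => h0, fun hh => h1, fun i hh => ?_⟩
      · rw [char4]
        intro i k' hik hk'
        rw [Fin.lt_def, shrink_val, shrink_val]
        have h2 := hchar ⟨(i : ℕ) + 2, hb i⟩ ⟨(k' : ℕ) + 2, hb k'⟩
          (by simp only [Fin.val_mk]; omega) (by simp only [Fin.val_mk]; omega)
        rw [Fin.lt_def] at h2
        have := (hv i).1
        have := (hv k').1
        omega
      · have e2 := shrink_val 2 2 π hb hv i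
        have := (hv i).1
        omega
    · -- case D : π 1 = 0, π (n-1) = 1, π 0 = 2
      right; right; right
      have hl : (π ⟨k + 4 - 1, by omega⟩ : ℕ) = 1 := by
        have e : (π.symm ⟨1, by omega⟩ : Fin (k+4)) = ⟨k + 4 - 1, by omega⟩ :=
          Fin.ext (by simp only [Fin.val_mk]; omega)
        rw [← e]; exact hqz
      have hrz : (π (π.symm ⟨2, by omega⟩) : ℕ) = 2 := by simp
      have hr0 : ((π.symm ⟨2, by omega⟩ : Fin (k+4)) : ℕ) = 0 := by
        by_contra hc
        have hbr := (π.symm ⟨2, by omega⟩ : Fin (k+4)).isLt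
        have hr1 : ((π.symm ⟨2, by omega⟩ : Fin (k+4)) : ℕ) ≠ 1 := by
          intro hc'
          have e : (π.symm ⟨2, by omega⟩ : Fin (k+4)) = ⟨1, by omega⟩ := Fin.ext (by simp only [Fin.val_mk]; omega)
          rw [e] at hrz
          omega
        have hrl : ((π.symm ⟨2, by omega⟩ : Fin (k+4)) : ℕ) ≠ k + 3 := by
          intro hc'
          have e : (π.symm ⟨2, by omega⟩ : Fin (k+4)) = ⟨k + 4 - 1, by omega⟩ :=
            Fin.ext (by simp only [Fin.val_mk]; omega)
          rw [e] at hrz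
          omega
        have h2 := hchar ⟨0, by omega⟩ (π.symm ⟨2, by omega⟩)
          (by simp only [Fin.val_mk]; omega) (by omega)
        rw [Fin.lt_def] at h2
        have := val_ne π (x := ⟨0, by omega⟩) (y := ⟨1, by omega⟩) (by simp)
        have := val_ne π (x := ⟨0, by omega⟩) (y := ⟨k + 4 - 1, by omega⟩)
          (by simp only [Fin.val_mk]; omega)
        omega
      have h0 : (π ⟨0, by omega⟩ : ℕ) = 2 := by
        have e : (π.symm ⟨2, by omega⟩ : Fin (k+4)) = ⟨0, by omega⟩ := Fin.ext (by simp only [Fin.val_mk]; omega)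
        rw [← e]; exact hrz
      have hposv : ∀ j : Fin (k+4), (j : ℕ) ≠ 0 → (j : ℕ) ≠ 1 → (j : ℕ) ≠ k + 3 →
          3 ≤ (π j : ℕ) := fun j hj hj' hj'' => by
        have := val_ne π (x := j) (y := ⟨0, by omega⟩) (by simp only [Fin.val_mk]; omega)
        have := val_ne π (x := j) (y := ⟨1, by omega⟩) (by simp only [Fin.val_mk]; omega)
        have := val_ne π (x := j) (y := ⟨k + 4 - 1, by omega⟩)
          (by simp only [Fin.val_mk]; omega)
        omega
      have hb : ∀ i : Fin (k+1), (i : ℕ) + 2 < k + 4 := fun i => by have := i.isLt; omega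
      have hv : ∀ i : Fin (k+1), 3 ≤ (π ⟨(i : ℕ) + 2, hb i⟩ : ℕ) ∧
          (π ⟨(i : ℕ) + 2, hb i⟩ : ℕ) - 3 < k + 1 := fun i => by
        have hb2 := i.isLt
        exact ⟨hposv _ (by simp only [Fin.val_mk]; omega) (by simp only [Fin.val_mk]; omega)
            (by simp only [Fin.val_mk]; omega),
          by have := (π ⟨(i : ℕ) + 2, hb i⟩).isLt; omega⟩
      refine ⟨shrink 2 3 π hb hv, ?_, fun hh => h0, fun hh => h1, fun hh => hl, fun i hh => ?_⟩
      · rw [char3]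
        intro i k' hik
        rw [Fin.lt_def, shrink_val, shrink_val]
        have hbk := k'.isLt
        have h2 := hchar ⟨(i : ℕ) + 2, hb i⟩ ⟨(k' : ℕ) + 2, hb k'⟩
          (by simp only [Fin.val_mk]; omega) (by simp only [Fin.val_mk]; omega)
        rw [Fin.lt_def] at h2
        have := (hv i).1
        have := (hv k').1
        omega
      · have e2 := shrink_val 2 3 π hb hv i
        have := (hv i).1
        omega
  · -- case C : π (n-1) = 0
    right; right; left
    have hl : (π ⟨k + 4 - 1, by omega⟩ : ℕ) = 0 := by
      have e : (π.symm ⟨0, by omega⟩ : Fin (k+4)) = ⟨k + 4 - 1, by omega⟩ :=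
        Fin.ext (by simp only [Fin.val_mk]; omega)
      rw [← e]; exact hpz
    have hposv : ∀ j : Fin (k+4), (j : ℕ) ≠ k + 3 → 1 ≤ (π j : ℕ) := fun j hj => by
      have := val_ne π (x := j) (y := ⟨k + 4 - 1, by omega⟩) (by simp only [Fin.val_mk]; omega)
      omega
    have hb : ∀ i : Fin (k+3), (i : ℕ) + 0 < k + 4 := fun i => by have := i.isLt; omega
    have hv : ∀ i : Fin (k+3), 1 ≤ (π ⟨(i : ℕ) + 0, hb i⟩ : ℕ) ∧
        (π ⟨(i : ℕ) + 0, hb i⟩ : ℕ) - 1 < k + 3 := fun i => by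
      have hb2 := i.isLt
      refine ⟨hposv _ (by simp only [Fin.val_mk]; omega), ?_⟩
      have h3 := (π ⟨(i : ℕ) + 0, hb i⟩).isLt
      have h4 := val_ne π (x := ⟨(i : ℕ) + 0, hb i⟩) (y := ⟨k + 4 - 1, by omega⟩)
        (by simp only [Fin.val_mk]; omega)
      omega
    refine ⟨shrink 0 1 π hb hv, ?_, fun hh => hl, fun i hh => ?_⟩
    · rw [char3]
      intro i k' hik
      rw [Fin.lt_def, shrink_val, shrink_val]
      have hbk := k'.isLt
      have h2 := hchar ⟨(i : ℕ) + 0, hb i⟩ ⟨(k' : ℕ) + 0, hb k'⟩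
        (by simp only [Fin.val_mk]; omega) (by simp only [Fin.val_mk]; omega)
      rw [Fin.lt_def] at h2
      have := (hv i).1
      have := (hv k').1
      omega
    · have e2 := shrink_val 0 1 π hb hv i
      have := (hv i).1
      show ((π ⟨(i : ℕ) + 0, hb i⟩ : Fin (k+4)) : ℕ) = _
      omega

section
variable {k : ℕ}

lemma disjAB (π : Perm (Fin (k + 4))) : ¬ (InA (k + 4) π ∧ InB (k + 4) π) := by
  rintro ⟨⟨σ, -, h0, -⟩, ⟨σ', -, h0', -⟩⟩
  have := h0 (by omega)
  have := h0' (by omega)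
  omega

lemma disjAC (π : Perm (Fin (k + 4))) : ¬ (InA (k + 4) π ∧ InC (k + 4) π) := by
  rintro ⟨⟨σ, -, h0, -⟩, ⟨σ', -, -, hmid⟩⟩
  have := h0 (by omega)
  have h2 := hmid ⟨0, by omega⟩ (by omega)
  simp only [Fin.val_mk] at h2
  omega

lemma disjAD (π : Perm (Fin (k + 4))) : ¬ (InA (k + 4) π ∧ InD (k + 4) π) := by
  rintro ⟨⟨σ, -, h0, -⟩, ⟨σ', -, h0', -⟩⟩
  have := h0 (by omega)
  have := h0' (by omega)
  omega

lemma disjBC (π : Perm (Fin (k + 4))) : ¬ (InB (k + 4) π ∧ InC (k + 4) π) := by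
  rintro ⟨⟨σ, -, -, h1, -⟩, ⟨σ', -, -, hmid⟩⟩
  have := h1 (by omega)
  have h2 := hmid ⟨1, by omega⟩ (by omega)
  simp only [Fin.val_mk] at h2
  omega

lemma disjBD (π : Perm (Fin (k + 4))) : ¬ (InB (k + 4) π ∧ InD (k + 4) π) := by
  rintro ⟨⟨σ, -, h0, -⟩, ⟨σ', -, h0', -⟩⟩
  have := h0 (by omega)
  have := h0' (by omega)
  omega

lemma disjCD (π : Perm (Fin (k + 4))) : ¬ (InC (k + 4) π ∧ InD (k + 4) π) := by
  rintro ⟨⟨σ, -, hl, -⟩, ⟨σ', -, -, -, hl', -⟩⟩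
  have := hl (by omega)
  have := hl' (by omega)
  omega

lemma iff4 (π : Perm (Fin (k + 4))) :
    AvoidsP4 π ↔ (InA (k + 4) π ∨ InB (k + 4) π ∨ InC (k + 4) π ∨ InD (k + 4) π) := by
  constructor
  · exact decomp4 π
  · rintro (hA | hB | hC | hD)
    · obtain ⟨σ, hσ, rfl⟩ := (inA_iff π).mp hA
      exact permA_avoids4 hσ
    · obtain ⟨σ, hσ, rfl⟩ := (inB_iff π).mp hB
      exact permB_avoids4 hσ
    · obtain ⟨σ, hσ, rfl⟩ := (inC_iff π).mp hC
      exact permC_avoids4 hσ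
    · obtain ⟨σ, hσ, rfl⟩ := (inD_iff π).mp hD
      exact permD_avoids4 hσ

end

lemma countP4 : ∀ n : ℕ, 1 ≤ n → Nat.card {π : Perm (Fin n) // AvoidsP4 π} = n * Nat.fib n := by
  intro n
  induction n using Nat.strong_induction_on with
  | _ n ih =>
    intro hn
    match n with
    | 1 => rw [card_all _ (avoids4_small (by omega)), card_perm_fin]; rfl
    | 2 => rw [card_all _ (avoids4_small (by omega)), card_perm_fin]; rfl
    | 3 => rw [card_all _ (avoids4_small (by omega)), card_perm_fin]; rfl
    | (k+4) =>
      rw [card_iff _ _ iff4,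
        card_or _ _ (by
          rintro π ⟨hA, hB | hC | hD⟩
          · exact disjAB π ⟨hA, hB⟩
          · exact disjAC π ⟨hA, hC⟩
          · exact disjAD π ⟨hA, hD⟩),
        card_or _ _ (by
          rintro π ⟨hB, hC | hD⟩
          · exact disjBC π ⟨hB, hC⟩
          · exact disjBD π ⟨hB, hD⟩),
        card_or _ _ (by
          rintro π ⟨hC, hD⟩
          exact disjCD π ⟨hC, hD⟩),
        card_iff _ _ inA_iff, card_class _ _ permA_inj,
        card_iff _ _ inB_iff, card_class _ _ permB_inj,
        card_iff _ _ inC_iff, card_class _ _ permC_inj,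
        card_iff _ _ inD_iff, card_class _ _ permD_inj,
        ih (k+3) (by omega) (by omega), ih (k+2) (by omega) (by omega),
        countP3 (k+3), countP3 (k+1)]
      have e1 : Nat.fib (k + 3 + 1) = Nat.fib (k + 2) + Nat.fib (k + 3) := Nat.fib_add_two
      have e2 : Nat.fib (k + 1 + 1) = Nat.fib (k + 2) := rfl
      have e3 : Nat.fib (k + 4) = Nat.fib (k + 2) + Nat.fib (k + 3) := Nat.fib_add_two
      rw [e1, e2]
      ring

/-- `|Av_n(P_4)| = n·F(n)`, and for `n ≥ 4` the set `Av_n(P_4)` is the disjoint union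
of `{1 ⊕ σ : σ ∈ Av_{n-1}(P_4)}`, `{21 ⊕ σ : σ ∈ Av_{n-2}(P_4)}`,
`{σ ⊖ 1 : σ ∈ Av_{n-1}(P_3)}` and `{3142[1,1,σ,1] : σ ∈ Av_{n-3}(P_3)}`. -/
theorem stmt_12 :
    (∀ n : ℕ, 1 ≤ n → Nat.card {π : Equiv.Perm (Fin n) // AvoidsP4 π} = n * Nat.fib n) ∧
    ∀ n : ℕ, 4 ≤ n →
      (∀ π : Equiv.Perm (Fin n), AvoidsP4 π ↔ (InA n π ∨ InB n π ∨ InC n π ∨ InD n π)) ∧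
      (∀ π : Equiv.Perm (Fin n), ¬ (InA n π ∧ InB n π)) ∧
      (∀ π : Equiv.Perm (Fin n), ¬ (InA n π ∧ InC n π)) ∧
      (∀ π : Equiv.Perm (Fin n), ¬ (InA n π ∧ InD n π)) ∧
      (∀ π : Equiv.Perm (Fin n), ¬ (InB n π ∧ InC n π)) ∧
      (∀ π : Equiv.Perm (Fin n), ¬ (InB n π ∧ InD n π)) ∧
      (∀ π : Equiv.Perm (Fin n), ¬ (InC n π ∧ InD n π)) := by
  constructor
  · exact countP4
  · intro n hn
    obtain ⟨k, rfl⟩ : ∃ k, n = k + 4 := ⟨n - 4, by omega⟩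
    exact ⟨iff4, disjAB, disjAC, disjAD, disjBC, disjBD, disjCD⟩
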